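/- arXiv:2509.03977 — 4 statements merged into one kernel-verified Lean document; each statement's English description precedes it below -/
import Mathlib

section
/- Let 𝒜 : E → F be an injective linear map between finite-dimensional real inner product spaces with positive definite 𝒜*𝒜, and let K ⊆ E be a nonempty closed convex set. For any x ∈ F, the projection Π_{𝒜K}(x) equals 𝒜(z(x)), where z(x) is the unique minimizer over K of the strongly convex function u ↦ (1/2)⟨𝒜*𝒜 u, u⟩ − ⟨𝒜*x, u⟩. -/
open scoped RealInnerProductSpace

/-- Let `𝒜 : E → F` be an injective continuous linear map with `𝒜*𝒜` positive
definite, `K ⊆ E` nonempty closed convex, and `x ∈ F`. If `z` minimizes the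
strongly convex function `u ↦ (1/2)⟪𝒜*𝒜 u, u⟫ − ⟪𝒜*x, u⟫` over `K`, then the
metric projection of `x` onto `𝒜K` equals `𝒜 z`. -/
theorem projection_image_eq
    {E F : Type*} [NormedAddCommGroup E] [InnerProductSpace ℝ E] [FiniteDimensional ℝ E]
    [NormedAddCommGroup F] [InnerProductSpace ℝ F] [FiniteDimensional ℝ F]
    (A : E →L[ℝ] F) (hA : Function.Injective A)
    (hpd : ∀ u : E, u ≠ 0 → 0 < ⟪(ContinuousLinearMap.adjoint A) (A u), u⟫)
    (K : Set E) (hne : K.Nonempty) (hclosed : IsClosed K) (hconv : Convex ℝ K)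
    (x : F) (z : E) (hzK : z ∈ K)
    (hzmin : ∀ u ∈ K,
      (1 / 2 : ℝ) * ⟪(ContinuousLinearMap.adjoint A) (A z), z⟫ -
        ⟪(ContinuousLinearMap.adjoint A) x, z⟫ ≤
      (1 / 2 : ℝ) * ⟪(ContinuousLinearMap.adjoint A) (A u), u⟫ -
        ⟪(ContinuousLinearMap.adjoint A) x, u⟫)
    (pr : F) (hprK : pr ∈ A '' K)
    (hprmin : ∀ w ∈ A '' K, ‖x - pr‖ ≤ ‖x - w‖) :
    pr = A z := by
  -- rewrite the objective as ½‖x - A u‖² - ½‖x‖²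
  have key : ∀ u : E,
      (1 / 2 : ℝ) * ⟪(ContinuousLinearMap.adjoint A) (A u), u⟫ -
        ⟪(ContinuousLinearMap.adjoint A) x, u⟫
      = (1 / 2 : ℝ) * ‖x - A u‖ ^ 2 - (1 / 2 : ℝ) * ‖x‖ ^ 2 := by
    intro u
    rw [ContinuousLinearMap.adjoint_inner_left, ContinuousLinearMap.adjoint_inner_left]
    rw [@norm_sub_sq_real F]
    rw [real_inner_self_eq_norm_sq (A u)]
    ring
  -- hence ‖x - A z‖ ≤ ‖x - A u‖ for all u ∈ K
  have hmin : ∀ u ∈ K, ‖x - A z‖ ≤ ‖x - A u‖ := by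
    intro u hu
    have h := hzmin u hu
    rw [key z, key u] at h
    nlinarith [norm_nonneg (x - A z), norm_nonneg (x - A u)]
  -- distances are equal
  obtain ⟨v, hvK, hv⟩ := hprK
  have h1 : ‖x - pr‖ ≤ ‖x - A z‖ := hprmin _ ⟨z, hzK, rfl⟩
  have h2 : ‖x - A z‖ ≤ ‖x - pr‖ := by rw [← hv]; exact hmin v hvK
  have heq : ‖x - pr‖ = ‖x - A z‖ := le_antisymm h1 h2
  -- midpoint argument
  have hmid : (1/2 : ℝ) • pr + (1/2 : ℝ) • A z ∈ A '' K := by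
    rw [← hv, ← map_smul, ← map_smul, ← map_add]
    exact ⟨_, hconv hvK hzK (by norm_num) (by norm_num) (by norm_num), rfl⟩
  have hd : ‖x - pr‖ ≤ ‖x - ((1/2 : ℝ) • pr + (1/2 : ℝ) • A z)‖ := hprmin _ hmid
  have hpar : ‖(x - pr) + (x - A z)‖ ^ 2 + ‖(x - pr) - (x - A z)‖ ^ 2
      = 2 * (‖x - pr‖ ^ 2 + ‖x - A z‖ ^ 2) := by
    have := parallelogram_law_with_norm ℝ (x - pr) (x - A z)
    nlinarith [this]
  have hm : x - ((1/2 : ℝ) • pr + (1/2 : ℝ) • A z) = (1/2 : ℝ) • ((x - pr) + (x - A z)) := by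
    module
  have hzero : ‖(x - pr) - (x - A z)‖ = 0 := by
    have hnorm : ‖x - ((1/2 : ℝ) • pr + (1/2 : ℝ) • A z)‖
        = (1/2 : ℝ) * ‖(x - pr) + (x - A z)‖ := by
      rw [hm, norm_smul]; simp
    rw [hnorm] at hd
    nlinarith [norm_nonneg ((x - pr) - (x - A z)), norm_nonneg ((x - pr) + (x - A z)),
      norm_nonneg (x - pr)]
  have : (x - pr) - (x - A z) = 0 := norm_eq_zero.mp hzero
  have h3 : A z - pr = 0 := by linear_combination (norm := abel) this
  have := sub_eq_zero.mp h3
  exact this.symm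
end

section
/- For n ≥ 2 and κ = 2ⁿ, the set Sₙ = {(x₁, x₂, x₃) ∈ ℝ³ : x₁^κ + x₂^κ ≤ x₃^κ, x₃ ≥ 0} equals the projection onto the first three coordinates of Kₙ = {(x₁, x₂, x₃, y₁, …, y_{n−1}, z₁, …, z_{n−1}) ∈ ℝ^{2n+1} : x₃² ≥ y₁² + z₁², x₃ ≥ 0, x₃yᵢ ≥ y_{i+1}² for i = 1,…,n−2, x₃y_{n−1} ≥ x₁², x₃zᵢ ≥ z_{i+1}² for i = 1,…,n−2, x₃z_{n−1} ≥ x₂²}. -/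
lemma aux_rev (n : ℕ) (hn : 2 ≤ n) (x x3 : ℝ) (hx3 : 0 ≤ x3) (y : ℕ → ℝ)
    (hmid : ∀ i, 1 ≤ i → i ≤ n - 2 → (y (i+1))^2 ≤ x3 * y i)
    (hlast : x^2 ≤ x3 * y (n-1)) :
    x ^ (2^n) ≤ x3 ^ (2^n - 2) * (y 1)^2 := by
  suffices h : ∀ k, 1 ≤ k → k ≤ n - 1 → x ^ 2 ^ (k+1) ≤ x3 ^ (2^(k+1) - 2) * (y (n-k))^2 by
    have h2 := h (n-1) (by omega) le_rfl
    rw [show n - (n-1) = 1 by omega, show (n-1)+1 = n by omega] at h2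
    exact h2
  intro k hk1
  induction k, hk1 using Nat.le_induction with
  | base =>
    intro _
    norm_num
    nlinarith [sq_nonneg x, sq_nonneg (x3 * y (n-1))]
  | succ k hk ih =>
    intro hkn
    have ih' := ih (by omega)
    have hstep : (y (n-k))^2 ≤ x3 * y (n-k-1) := by
      have := hmid (n-k-1) (by omega) (by omega)
      rwa [show n-k-1+1 = n-k by omega] at this
    have hm : 1 ≤ 2^(k+1) := Nat.one_le_two_pow
    have e0 : 2^(k+2) = 2^(k+1) * 2 := by ring
    have e1 : x ^ 2^(k+2) = (x ^ 2^(k+1))^2 := by rw [e0, pow_mul]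
    have e2 : x3 ^ (2^(k+2) - 2) = (x3 ^ (2^(k+1) - 1))^2 := by
      rw [← pow_mul]; congr 1; omega
    have hxnn : (0:ℝ) ≤ x ^ 2^(k+1) := Even.pow_nonneg ⟨2^k, by ring⟩ x
    have hb : (0:ℝ) ≤ x3 ^ (2^(k+1) - 2) := pow_nonneg hx3 _
    have e3 : x3 ^ (2^(k+1) - 2) * x3 = x3 ^ (2^(k+1) - 1) := by
      rw [← pow_succ]; congr 1; omega
    have chain : x ^ 2^(k+1) ≤ x3 ^ (2^(k+1) - 1) * y (n-k-1) := by
      calc x ^ 2^(k+1) ≤ x3 ^ (2^(k+1) - 2) * (y (n-k))^2 := ih'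
        _ ≤ x3 ^ (2^(k+1) - 2) * (x3 * y (n-k-1)) :=
            mul_le_mul_of_nonneg_left hstep hb
        _ = x3 ^ (2^(k+1) - 1) * y (n-k-1) := by rw [← mul_assoc, e3]
    rw [show n - (k+1) = n-k-1 by omega, e1, e2, ← mul_pow]
    exact pow_le_pow_left₀ hxnn chain 2



/-- For `n ≥ 2` and `κ = 2ⁿ`, a point `(x₁, x₂, x₃)` satisfies
`x₁^κ + x₂^κ ≤ x₃^κ, x₃ ≥ 0` (i.e. lies in `Sₙ`) iff it is the projection onto
the first three coordinates of a point of the cone `Kₙ`, i.e. iff there exist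
`y₁,…,y_{n−1}, z₁,…,z_{n−1}` satisfying the defining inequalities of `Kₙ`. -/
theorem S_eq_projection_K (n : ℕ) (hn : 2 ≤ n) (x1 x2 x3 : ℝ) :
    (x1 ^ (2 ^ n) + x2 ^ (2 ^ n) ≤ x3 ^ (2 ^ n) ∧ 0 ≤ x3) ↔
    ∃ y z : ℕ → ℝ,
      (y 1) ^ 2 + (z 1) ^ 2 ≤ x3 ^ 2 ∧ 0 ≤ x3 ∧
      (∀ i : ℕ, 1 ≤ i → i ≤ n - 2 → (y (i + 1)) ^ 2 ≤ x3 * y i) ∧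
      x1 ^ 2 ≤ x3 * y (n - 1) ∧
      (∀ i : ℕ, 1 ≤ i → i ≤ n - 2 → (z (i + 1)) ^ 2 ≤ x3 * z i) ∧
      x2 ^ 2 ≤ x3 * z (n - 1) := by
  have hev : Even (2^n) := ⟨2^(n-1), by rw [← two_mul, ← pow_succ']; congr 1; omega⟩
  constructor
  · rintro ⟨h, hx3⟩
    rcases eq_or_lt_of_le hx3 with h0 | h0
    · -- x3 = 0
      have h0' : x3 = 0 := h0.symm
      subst h0'
      have hz : (0:ℝ)^(2^n) = 0 := zero_pow (by positivity)
      rw [hz] at h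
      have h1 : x1 ^ (2^n) = 0 := le_antisymm (by nlinarith [hev.pow_nonneg x1, hev.pow_nonneg x2]) (hev.pow_nonneg x1)
      have h2 : x2 ^ (2^n) = 0 := le_antisymm (by nlinarith [hev.pow_nonneg x1, hev.pow_nonneg x2]) (hev.pow_nonneg x2)
      have hx1 : x1 = 0 := pow_eq_zero_iff (by positivity) |>.mp h1
      have hx2 : x2 = 0 := pow_eq_zero_iff (by positivity) |>.mp h2
      exact ⟨fun _ => 0, fun _ => 0, by norm_num, le_refl 0, by norm_num,
        by rw [hx1]; norm_num, by norm_num, by rw [hx2]; norm_num⟩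
    · -- x3 > 0
      have hne : x3 ≠ 0 := ne_of_gt h0
      set u1 : ℝ := x1 / x3 with hu1
      set u2 : ℝ := x2 / x3 with hu2
      have hu : u1^(2^n) + u2^(2^n) ≤ 1 := by
        rw [hu1, hu2, div_pow, div_pow, ← add_div, div_le_one (by positivity)]
        exact h
      refine ⟨fun i => x3 * u1^(2^(n-i)), fun i => x3 * u2^(2^(n-i)), ?_, hx3, ?_, ?_, ?_, ?_⟩
      · have e : 2^n = 2^(n-1) * 2 := by rw [← pow_succ]; congr 1; omega
        rw [e, pow_mul, pow_mul] at hu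
        calc (x3 * u1^(2^(n-1)))^2 + (x3 * u2^(2^(n-1)))^2
            = x3^2 * ((u1^(2^(n-1)))^2 + (u2^(2^(n-1)))^2) := by ring
          _ ≤ x3^2 * 1 := mul_le_mul_of_nonneg_left hu (sq_nonneg x3)
          _ = x3^2 := by ring
      · intro i hi1 hi2
        have e : 2^(n-i) = 2^(n-(i+1)) * 2 := by rw [← pow_succ]; congr 1; omega
        show (x3 * u1^(2^(n-(i+1))))^2 ≤ x3 * (x3 * u1^(2^(n-i)))
        exact le_of_eq (by rw [e, pow_mul]; ring)
      · show x1^2 ≤ x3 * (x3 * u1^(2^(n-(n-1))))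
        rw [show n-(n-1) = 1 by omega]
        have : x3 * (x3 * u1^(2^1)) = x1^2 := by
          rw [hu1]; field_simp; rw [pow_one, div_pow, mul_div_assoc', mul_div_cancel_left₀ _ (pow_ne_zero 2 hne)]
        rw [this]
      · intro i hi1 hi2
        have e : 2^(n-i) = 2^(n-(i+1)) * 2 := by rw [← pow_succ]; congr 1; omega
        show (x3 * u2^(2^(n-(i+1))))^2 ≤ x3 * (x3 * u2^(2^(n-i)))
        exact le_of_eq (by rw [e, pow_mul]; ring)
      · show x2^2 ≤ x3 * (x3 * u2^(2^(n-(n-1))))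
        rw [show n-(n-1) = 1 by omega]
        have : x3 * (x3 * u2^(2^1)) = x2^2 := by
          rw [hu2]; field_simp; rw [pow_one, div_pow, mul_div_assoc', mul_div_cancel_left₀ _ (pow_ne_zero 2 hne)]
        rw [this]
  · rintro ⟨y, z, h1, hx3, hy, hyl, hz, hzl⟩
    refine ⟨?_, hx3⟩
    have Hy := aux_rev n hn x1 x3 hx3 y hy hyl
    have Hz := aux_rev n hn x2 x3 hx3 z hz hzl
    have e3 : x3 ^ (2^n - 2) * x3^2 = x3 ^ (2^n) := by
      rw [← pow_add]; congr 1
      have : 2 ≤ 2^n := by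
        calc 2 = 2^1 := (pow_one 2).symm
        _ ≤ 2^n := Nat.pow_le_pow_right (by norm_num) (by omega)
      omega
    have hb : (0:ℝ) ≤ x3 ^ (2^n - 2) := pow_nonneg hx3 _
    calc x1 ^ (2^n) + x2 ^ (2^n) ≤ x3 ^ (2^n - 2) * ((y 1)^2 + (z 1)^2) := by
          rw [mul_add]; exact add_le_add Hy Hz
      _ ≤ x3 ^ (2^n - 2) * x3^2 := mul_le_mul_of_nonneg_left h1 hb
      _ = x3 ^ (2^n) := e3
end

section
/- Let n ≥ 2, κ = 2ⁿ, λ = κ/(κ−1). Let u₁, u₂ ≥ 0 with u₁^λ + u₂^λ = 1, and set v = (u₁, u₂, −1, 0, …, 0) ∈ ℝ^{2n+1}, a boundary point of Kₙ°. Then the normal cone of Kₙ° at v is the ray generated by w = (u₁^{λ/2ⁿ}, u₂^{λ/2ⁿ}, 1, u₁^{λ/2}, …, u₁^{λ/2^{n−1}}, u₂^{λ/2}, …, u₂^{λ/2^{n−1}}), i.e., N_{Kₙ°}(v) = {t·w : t ≥ 0}. -/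
open scoped RealInnerProductSpace

open Fin.NatCast

open Fin.NatCast in
/-- The cone `Kₙ ⊆ ℝ^{2n+1}`: coordinates are
`x₁ = p 0`, `x₂ = p 1`, `x₃ = p 2`, `yᵢ = p (2+i)` and `zᵢ = p (n+1+i)` for
`i = 1, …, n−1`. -/
def coneK (n : ℕ) : Set (EuclideanSpace ℝ (Fin (2 * n + 1))) :=
  {p | (p 3) ^ 2 + (p ((n : ℕ) + 2 : ℕ)) ^ 2 ≤ (p 2) ^ 2 ∧ 0 ≤ p 2 ∧
       (∀ i : ℕ, 1 ≤ i → i ≤ n - 2 → (p ((2 + i + 1 : ℕ))) ^ 2 ≤ p 2 * p ((2 + i : ℕ))) ∧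
       (p 0) ^ 2 ≤ p 2 * p ((n + 1 : ℕ)) ∧
       (∀ i : ℕ, 1 ≤ i → i ≤ n - 2 → (p ((n + 1 + i + 1 : ℕ))) ^ 2 ≤ p 2 * p ((n + 1 + i : ℕ))) ∧
       (p 1) ^ 2 ≤ p 2 * p ((2 * n : ℕ))}

/-- The polar cone. -/
def polarCone {m : ℕ} (C : Set (EuclideanSpace ℝ (Fin m))) : Set (EuclideanSpace ℝ (Fin m)) :=
  {v | ∀ x ∈ C, ⟪v, x⟫ ≤ 0}

/-- The normal cone of a convex set `D` at `z`. -/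
def normalConeAt {m : ℕ} (D : Set (EuclideanSpace ℝ (Fin m))) (z : EuclideanSpace ℝ (Fin m)) :
    Set (EuclideanSpace ℝ (Fin m)) :=
  {v | ∀ w ∈ D, ⟪v, w - z⟫ ≤ 0}

namespace ConeAux


lemma cs2 (a b p q : ℝ) : (a*p + b*q)^2 ≤ (a^2+b^2)*(p^2+q^2) := by
  nlinarith [sq_nonneg (a*q - b*p)]

lemma sqrt_eq_of_sq_eq {s A : ℝ} (hs : 0 ≤ s) (hA : 0 ≤ A) (h : s^2 = A^2) : s = A := by
  nlinarith [sq_nonneg (s - A), sq_nonneg (s + A)]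

lemma holder_eq : ∀ m : ℕ, 1 ≤ m → ∀ A B s t : ℝ, 0 ≤ A → 0 ≤ B → 0 ≤ s → 0 ≤ t →
    A^(2^m) + B^(2^m) = 1 → 1 ≤ A^(2^m - 1)*s + B^(2^m - 1)*t → s^(2^m) + t^(2^m) ≤ 1 →
    s = A ∧ t = B := by
  intro m hm
  induction m, hm using Nat.le_induction with
  | base =>
    intro A B s t hA hB hs ht hAB hmid hst
    simp only [pow_one] at hAB hmid hst
    norm_num at hmid ⊢
    -- hmid : 1 ≤ A*s + B*t  (with 2^1-1 = 1 exponents)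
    have h2 : A*s + B*t ≤ 1 := by nlinarith [cs2 A B s t]
    have heq : A*s + B*t = 1 := le_antisymm h2 hmid
    have hst1 : s^2 + t^2 = 1 := by nlinarith [cs2 A B s t]
    have hz : (A*t - B*s)^2 = 0 := by nlinarith [cs2 A B s t]
    have hcross : A*t = B*s := by nlinarith [sq_nonneg (A*t - B*s)]
    constructor
    · linear_combination (-s)*hAB + A*heq + (-B)*hcross
    · linear_combination (-t)*hAB + B*heq + A*hcross
  | succ m hm ih =>
    intro A B s t hA hB hs ht hAB hmid hst
    have hκ : 2 ≤ 2^m := Nat.one_lt_two_pow (by omega)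
    have e1 : 2^(m+1) = 2^m * 2 := by ring
    have e2 : 2^(m+1) - 1 = 2^m + (2^m - 1) := by omega
    have hsplitA : A^(2^(m+1) - 1) = A^(2^m) * A^(2^m - 1) := by
      rw [e2, pow_add]
    have hsplitB : B^(2^(m+1) - 1) = B^(2^m) * B^(2^m - 1) := by
      rw [e2, pow_add]
    -- step 1 : 1 ≤ (A^2)^(2^m-1) * s^2 + (B^2)^(2^m-1) * t^2
    set a := A^(2^m); set b := B^(2^m)
    set p := A^(2^m - 1) * s; set q := B^(2^m - 1) * t
    have hmid' : 1 ≤ a*p + b*q := by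
      rw [hsplitA, hsplitB] at hmid
      have hr : a * A^(2^m-1) * s + b * B^(2^m-1) * t = a*p + b*q := by ring
      linarith [hr ▸ hmid]
    have hABsq : a^2 + b^2 = 1 := by
      rw [← pow_mul, ← pow_mul, ← e1]; exact hAB
    have hP : 1 ≤ p^2 + q^2 := by nlinarith [cs2 a b p q]
    have hp2 : p^2 = (A^2)^(2^m - 1) * s^2 := by
      rw [mul_pow, ← pow_mul, ← pow_mul']
    have hq2 : q^2 = (B^2)^(2^m - 1) * t^2 := by
      rw [mul_pow, ← pow_mul, ← pow_mul']
    have hmid2 : 1 ≤ (A^2)^(2^m - 1) * s^2 + (B^2)^(2^m - 1) * t^2 := by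
      rw [← hp2, ← hq2]; exact hP
    have hAB2 : (A^2)^(2^m) + (B^2)^(2^m) = 1 := by
      rw [← pow_mul', ← pow_mul', ← e1]; exact hAB
    have hst2 : (s^2)^(2^m) + (t^2)^(2^m) ≤ 1 := by
      rw [← pow_mul', ← pow_mul', ← e1]; exact hst
    obtain ⟨h1, h2⟩ := ih (A^2) (B^2) (s^2) (t^2) (sq_nonneg A) (sq_nonneg B)
      (sq_nonneg s) (sq_nonneg t) hAB2 (by linarith [hmid2]) hst2
    exact ⟨sqrt_eq_of_sq_eq hs hA h1, sqrt_eq_of_sq_eq ht hB h2⟩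


lemma inner_v (m : ℕ) (hm : 5 ≤ m) (u1 u2 : ℝ) (v : EuclideanSpace ℝ (Fin m))
    (hv : ∀ j : Fin m, v j = if (j : ℕ) = 0 then u1 else if (j : ℕ) = 1 then u2
            else if (j : ℕ) = 2 then -1 else 0)
    (x : EuclideanSpace ℝ (Fin m)) :
    ⟪x, v⟫ = u1 * x ⟨0, by omega⟩ + u2 * x ⟨1, by omega⟩ - x ⟨2, by omega⟩ := by
  have h : ⟪x, v⟫ = ∑ j, x j * v j := by
    simp [PiLp.inner_apply, RCLike.inner_apply, conj_trivial]
    exact Finset.sum_congr rfl (fun _ _ => mul_comm _ _)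
  rw [h]
  have key : ∀ j : Fin m, x j * v j =
      (if j = (⟨0, by omega⟩ : Fin m) then u1 * x ⟨0, by omega⟩ else 0)
      + (if j = (⟨1, by omega⟩ : Fin m) then u2 * x ⟨1, by omega⟩ else 0)
      + (if j = (⟨2, by omega⟩ : Fin m) then -(x ⟨2, by omega⟩) else 0) := by
    intro j
    rw [hv j]
    by_cases h0 : (j : ℕ) = 0
    · have : j = (⟨0, by omega⟩ : Fin m) := by ext; simpa using h0
      rw [this]; simp [Fin.ext_iff]; try ring
    · by_cases h1 : (j : ℕ) = 1
      · have : j = (⟨1, by omega⟩ : Fin m) := by ext; simpa using h1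
        rw [this]; simp [Fin.ext_iff]; try ring
      · by_cases h2 : (j : ℕ) = 2
        · have : j = (⟨2, by omega⟩ : Fin m) := by ext; simpa using h2
          rw [this]; simp [Fin.ext_iff]; try ring
        · have e0 : ¬ (j = (⟨0, by omega⟩ : Fin m)) := by
            intro h; apply h0; rw [h]
          have e1 : ¬ (j = (⟨1, by omega⟩ : Fin m)) := by
            intro h; apply h1; rw [h]
          have e2 : ¬ (j = (⟨2, by omega⟩ : Fin m)) := by
            intro h; apply h2; rw [h]
          simp [h0, h1, h2, e0, e1, e2]
  rw [Finset.sum_congr rfl (fun j _ => key j)]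
  rw [Finset.sum_add_distrib, Finset.sum_add_distrib]
  simp [Finset.sum_ite_eq']
  ring

variable {n : ℕ}

lemma sq_zero {r : ℝ} (h : r^2 ≤ 0) : r = 0 := by nlinarith [sq_nonneg r]

lemma lit2 : ((2 : Fin (2*n+1))) = ((2:ℕ) : Fin (2*n+1)) := rfl
lemma lit3 : ((3 : Fin (2*n+1))) = ((3:ℕ) : Fin (2*n+1)) := rfl
lemma lit0 : ((0 : Fin (2*n+1))) = ((0:ℕ) : Fin (2*n+1)) := rfl
lemma lit1 : ((1 : Fin (2*n+1))) = ((1:ℕ) : Fin (2*n+1)) := rfl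

lemma cast_idx_eq (a b : ℕ) (h : a = b) :
    ((a : ℕ) : Fin (2*n+1)) = ((b : ℕ) : Fin (2*n+1)) := by rw [h]

/-- If `x₃ = 0` then every coordinate vanishes. -/
lemma coneK_zero (hn : 2 ≤ n) {p : EuclideanSpace ℝ (Fin (2*n+1))}
    (hp : p ∈ coneK n) (h2 : p ((2:ℕ) : Fin (2*n+1)) = 0) (j : Fin (2*n+1)) : p j = 0 := by
  obtain ⟨h1, _, hy, hx0, hz, hx1⟩ := hp
  simp only [lit0, lit1, lit2, lit3] at h1 hy hx0 hz hx1
  rw [h2] at h1 hy hx0 hz hx1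
  simp only [zero_mul] at hy hx0 hz hx1
  have hy1 : p ((3:ℕ) : Fin (2*n+1)) = 0 ∧ p ((n+2 : ℕ) : Fin (2*n+1)) = 0 := by
    constructor <;> [skip; skip] <;>
    · apply sq_zero; nlinarith [sq_nonneg (p ((3:ℕ) : Fin (2*n+1))),
        sq_nonneg (p ((n+2:ℕ) : Fin (2*n+1))), h1]
  have hj := j.isLt
  set k := (j : ℕ) with hk
  have hjk : j = ((k : ℕ) : Fin (2*n+1)) := by rw [hk, Fin.cast_val_eq_self]
  rw [hjk]
  rcases Nat.lt_or_ge k 3 with h3 | h3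
  · interval_cases k
    · exact sq_zero (by simpa using hx0)
    · exact sq_zero (by simpa using hx1)
    · exact h2
  · rcases Nat.lt_or_ge k (n+2) with h4 | h4
    · -- 3 ≤ k ≤ n+1 : y-coordinates
      rcases Nat.eq_or_lt_of_le h3 with h5 | h5
      · rw [cast_idx_eq k 3 h5.symm]; exact hy1.1
      · -- 4 ≤ k ≤ n+1, use chain at i = k - 3
        have := hy (k-3) (by omega) (by omega)
        rw [cast_idx_eq (2+(k-3)+1) k (by omega)] at this
        exact sq_zero this
    · -- n+2 ≤ k ≤ 2n : z-coordinates
      rcases Nat.eq_or_lt_of_le h4 with h5 | h5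
      · rw [cast_idx_eq k (n+2) h5.symm]; exact hy1.2
      · have := hz (k-(n+2)) (by omega) (by omega)
        rw [cast_idx_eq (n+1+(k-(n+2))+1) k (by omega)] at this
        exact sq_zero this

/-- Nonnegativity of the `y`/`z` coordinates (coordinates `3 ≤ k ≤ 2n`). -/
lemma coneK_nonneg (hn : 2 ≤ n) {p : EuclideanSpace ℝ (Fin (2*n+1))}
    (hp : p ∈ coneK n) {k : ℕ} (h3 : 3 ≤ k) (h2n : k ≤ 2*n) :
    0 ≤ p ((k : ℕ) : Fin (2*n+1)) := by
  rcases eq_or_lt_of_le hp.2.1 with h2 | h2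
  · rw [coneK_zero hn hp h2.symm]
  obtain ⟨h1, _, hy, hx0, hz, hx1⟩ := hp
  simp only [lit0, lit1, lit2, lit3] at h1 hy hx0 hz hx1
  have key : 0 ≤ p ((2:ℕ) : Fin (2*n+1)) * p ((k : ℕ) : Fin (2*n+1)) := by
    rcases Nat.lt_or_ge k (n+2) with h4 | h4
    · rcases Nat.eq_or_lt_of_le (show k ≤ n+1 by omega) with h5 | h5
      · rw [cast_idx_eq k (n+1) h5]; exact le_trans (sq_nonneg _) hx0
      · have := hy (k-2) (by omega) (by omega)
        rw [cast_idx_eq (2+(k-2)) k (by omega)] at this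
        exact le_trans (sq_nonneg _) this
    · rcases Nat.eq_or_lt_of_le h2n with h5 | h5
      · rw [cast_idx_eq k (2*n) h5]; exact le_trans (sq_nonneg _) hx1
      · have := hz (k-(n+1)) (by omega) (by omega)
        rw [cast_idx_eq (n+1+(k-(n+1))) k (by omega)] at this
        exact le_trans (sq_nonneg _) this
  exact (mul_nonneg_iff_of_pos_left h2).mp key

lemma smul_apply' (c : ℝ) (p : EuclideanSpace ℝ (Fin (2*n+1))) (j : Fin (2*n+1)) :
    (c • p) j = c * p j := rfl

lemma add_apply' (p q : EuclideanSpace ℝ (Fin (2*n+1))) (j : Fin (2*n+1)) :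
    (p + q) j = p j + q j := rfl

lemma coneK_smul (c : ℝ) (hc : 0 ≤ c) {p : EuclideanSpace ℝ (Fin (2*n+1))}
    (hp : p ∈ coneK n) : c • p ∈ coneK n := by
  obtain ⟨h1, h2, hy, hx0, hz, hx1⟩ := hp
  refine ⟨?_, ?_, ?_, ?_, ?_, ?_⟩
  · simp only [smul_apply']; nlinarith [sq_nonneg c]
  · simp only [smul_apply']; exact mul_nonneg hc h2
  · intro i hi1 hi2; have := hy i hi1 hi2; simp only [smul_apply']; nlinarith [sq_nonneg c]
  · simp only [smul_apply']; nlinarith [sq_nonneg c]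
  · intro i hi1 hi2; have := hz i hi1 hi2; simp only [smul_apply']; nlinarith [sq_nonneg c]
  · simp only [smul_apply']; nlinarith [sq_nonneg c]

lemma coneK_zero_mem : (0 : EuclideanSpace ℝ (Fin (2*n+1))) ∈ coneK n := by
  refine ⟨?_, ?_, ?_, ?_, ?_, ?_⟩ <;> simp

lemma coneK_closed : IsClosed (coneK n) := by
  have hc : ∀ (j : Fin (2*n+1)), Continuous fun p : EuclideanSpace ℝ (Fin (2*n+1)) => p j :=
    fun j => (continuous_apply j).comp (PiLp.continuous_ofLp 2 _)
  show IsClosed ({p : EuclideanSpace ℝ (Fin (2*n+1)) |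
      (p 3) ^ 2 + (p ((n : ℕ) + 2 : ℕ)) ^ 2 ≤ (p 2) ^ 2} ∩
    ({p | 0 ≤ p 2} ∩
    ({p | ∀ i : ℕ, 1 ≤ i → i ≤ n - 2 → (p ((2 + i + 1 : ℕ))) ^ 2 ≤ p 2 * p ((2 + i : ℕ))} ∩
    ({p | (p 0) ^ 2 ≤ p 2 * p ((n + 1 : ℕ))} ∩
    ({p | ∀ i : ℕ, 1 ≤ i → i ≤ n - 2 → (p ((n + 1 + i + 1 : ℕ))) ^ 2 ≤ p 2 * p ((n + 1 + i : ℕ))} ∩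
    {p | (p 1) ^ 2 ≤ p 2 * p ((2 * n : ℕ))})))))
  refine IsClosed.inter ?_ (IsClosed.inter ?_ (IsClosed.inter ?_ (IsClosed.inter ?_
    (IsClosed.inter ?_ ?_))))
  · exact isClosed_le (((hc _).pow 2).add ((hc _).pow 2)) ((hc _).pow 2)
  · exact isClosed_le continuous_const (hc _)
  · rw [Set.setOf_forall]
    refine isClosed_iInter fun i => ?_
    by_cases h1 : 1 ≤ i
    · by_cases h2 : i ≤ n - 2
      · simp only [h1, h2, forall_true_left]
        exact isClosed_le ((hc _).pow 2) ((hc _).mul (hc _))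
      · simp [h2]
    · simp [h1]
  · exact isClosed_le ((hc _).pow 2) ((hc _).mul (hc _))
  · rw [Set.setOf_forall]
    refine isClosed_iInter fun i => ?_
    by_cases h1 : 1 ≤ i
    · by_cases h2 : i ≤ n - 2
      · simp only [h1, h2, forall_true_left]
        exact isClosed_le ((hc _).pow 2) ((hc _).mul (hc _))
      · simp [h2]
    · simp [h1]
  · exact isClosed_le ((hc _).pow 2) ((hc _).mul (hc _))

lemma soc_add (a b e a' b' e' : ℝ) (h : a^2+b^2 ≤ e^2) (h' : a'^2+b'^2 ≤ e'^2)
    (he : 0 ≤ e) (he' : 0 ≤ e') : (a+a')^2+(b+b')^2 ≤ (e+e')^2 := by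
  have key : a*a' + b*b' ≤ e*e' := by
    nlinarith [sq_nonneg (a*b' - b*a'), mul_nonneg he he', sq_nonneg (a*a'+b*b' - e*e'),
      sq_nonneg (a*a'+b*b'+e*e')]
  nlinarith

lemma rot_add (b a c b' a' c' : ℝ) (h : b^2 ≤ a*c) (h' : b'^2 ≤ a'*c')
    (ha : 0 ≤ a) (ha' : 0 ≤ a') (hc : 0 ≤ c) (hc' : 0 ≤ c') :
    (b+b')^2 ≤ (a+a')*(c+c') := by
  have key : 2*(b*b') ≤ a*c' + a'*c := by
    nlinarith [sq_nonneg (a*c' - a'*c), mul_nonneg (mul_nonneg ha hc) (mul_nonneg ha' hc'),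
      mul_le_mul h h' (sq_nonneg b') (mul_nonneg ha hc),
      sq_nonneg (2*(b*b') - (a*c'+a'*c)), sq_nonneg (2*(b*b') + (a*c'+a'*c)),
      mul_nonneg ha hc', mul_nonneg ha' hc]
  nlinarith

lemma coneK_add (hn : 2 ≤ n) {p q : EuclideanSpace ℝ (Fin (2*n+1))}
    (hp : p ∈ coneK n) (hq : q ∈ coneK n) : p + q ∈ coneK n := by
  by_cases hp2 : p ((2:ℕ) : Fin (2*n+1)) = 0
  · have hpq : p + q = q := by
      ext j; rw [add_apply', coneK_zero hn hp hp2 j]; ring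
    rwa [hpq]
  by_cases hq2 : q ((2:ℕ) : Fin (2*n+1)) = 0
  · have hpq : p + q = p := by
      ext j; rw [add_apply', coneK_zero hn hq hq2 j]; ring
    rwa [hpq]
  obtain ⟨h1, h2, hy, hx0, hz, hx1⟩ := hp
  obtain ⟨h1', h2', hy', hx0', hz', hx1'⟩ := hq
  rw [lit2] at h2 h2'
  refine ⟨?_, ?_, ?_, ?_, ?_, ?_⟩
  · simp only [add_apply', lit2, lit3] at *
    exact soc_add _ _ _ _ _ _ h1 h1' h2 h2'
  · simp only [add_apply', lit2]; exact add_nonneg h2 h2'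
  · intro i hi1 hi2
    simp only [add_apply', lit2]
    exact rot_add _ _ _ _ _ _ (by rw [← lit2]; exact hy i hi1 hi2)
      (by rw [← lit2]; exact hy' i hi1 hi2) h2 h2'
      (coneK_nonneg hn ⟨h1, by rw [lit2]; exact h2, hy, hx0, hz, hx1⟩ (show 3 ≤ 2+i by omega) (by omega))
      (coneK_nonneg hn ⟨h1', by rw [lit2]; exact h2', hy', hx0', hz', hx1'⟩ (show 3 ≤ 2+i by omega) (by omega))
  · simp only [add_apply', lit2]
    exact rot_add _ _ _ _ _ _ (by rw [← lit2]; exact hx0) (by rw [← lit2]; exact hx0') h2 h2'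
      (coneK_nonneg hn ⟨h1, by rw [lit2]; exact h2, hy, hx0, hz, hx1⟩ (show 3 ≤ n+1 by omega) (by omega))
      (coneK_nonneg hn ⟨h1', by rw [lit2]; exact h2', hy', hx0', hz', hx1'⟩ (show 3 ≤ n+1 by omega) (by omega))
  · intro i hi1 hi2
    simp only [add_apply', lit2]
    exact rot_add _ _ _ _ _ _ (by rw [← lit2]; exact hz i hi1 hi2)
      (by rw [← lit2]; exact hz' i hi1 hi2) h2 h2'
      (coneK_nonneg hn ⟨h1, by rw [lit2]; exact h2, hy, hx0, hz, hx1⟩ (show 3 ≤ n+1+i by omega) (by omega))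
      (coneK_nonneg hn ⟨h1', by rw [lit2]; exact h2', hy', hx0', hz', hx1'⟩ (show 3 ≤ n+1+i by omega) (by omega))
  · simp only [add_apply', lit2]
    exact rot_add _ _ _ _ _ _ (by rw [← lit2]; exact hx1) (by rw [← lit2]; exact hx1') h2 h2'
      (coneK_nonneg hn ⟨h1, by rw [lit2]; exact h2, hy, hx0, hz, hx1⟩ (show 3 ≤ 2*n by omega) (by omega))
      (coneK_nonneg hn ⟨h1', by rw [lit2]; exact h2', hy', hx0', hz', hx1'⟩ (show 3 ≤ 2*n by omega) (by omega))

lemma polar_closed {m : ℕ} (C : Set (EuclideanSpace ℝ (Fin m))) : IsClosed (polarCone C) := by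
  have : polarCone C = ⋂ x ∈ C, {v : EuclideanSpace ℝ (Fin m) | ⟪v, x⟫ ≤ 0} := by
    ext v; simp [polarCone]
  rw [this]
  exact isClosed_biInter fun x _ =>
    isClosed_le (Continuous.inner continuous_id continuous_const) continuous_const

lemma polar_zero_mem {m : ℕ} (C : Set (EuclideanSpace ℝ (Fin m))) : 0 ∈ polarCone C := by
  intro x _; simp

lemma polar_smul {m : ℕ} {C : Set (EuclideanSpace ℝ (Fin m))} {c : ℝ} (hc : 0 ≤ c)
    {v : EuclideanSpace ℝ (Fin m)} (hv : v ∈ polarCone C) : c • v ∈ polarCone C := by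
  intro x hx
  rw [real_inner_smul_left]
  exact mul_nonpos_of_nonneg_of_nonpos hc (hv x hx)

/-- bipolar: for a nonempty closed convex cone given as a `ConvexCone`,
`polarCone (polarCone C) ⊆ C`. -/
lemma polar_polar_subset {m : ℕ} (K : ConvexCone ℝ (EuclideanSpace ℝ (Fin m)))
    (ne : (K : Set (EuclideanSpace ℝ (Fin m))).Nonempty)
    (hc : IsClosed (K : Set (EuclideanSpace ℝ (Fin m)))) :
    polarCone (polarCone (K : Set (EuclideanSpace ℝ (Fin m)))) ⊆ K := by
  intro x hx
  by_contra hxK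
  obtain ⟨f, u, hfu, hux⟩ := geometric_hahn_banach_closed_point K.convex hc hxK
  obtain ⟨a0, ha0⟩ := ne
  have hfa : ∀ a ∈ (K : Set (EuclideanSpace ℝ (Fin m))), f a ≤ 0 := by
    intro a ha
    by_contra hpos
    push_neg at hpos
    have h1 := hfu _ (K.smul_mem (show (0:ℝ) < (|u|+1)/f a by positivity) ha)
    rw [map_smul, smul_eq_mul, div_mul_cancel₀ _ (ne_of_gt hpos)] at h1
    linarith [le_abs_self u]
  have hu : 0 ≤ u := by
    by_contra hneg
    push_neg at hneg
    have hf0 : f a0 < 0 := by have := hfu a0 ha0; linarith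
    have h1 := hfu _ (K.smul_mem
      (show (0:ℝ) < u/(2 * f a0) from div_pos_of_neg_of_neg hneg (by linarith)) ha0)
    rw [map_smul, smul_eq_mul, div_mul_eq_mul_div, mul_div_mul_right _ _ (ne_of_lt hf0)] at h1
    linarith
  set y := (InnerProductSpace.toDual ℝ (EuclideanSpace ℝ (Fin m))).symm f with hydef
  have hy : ∀ z, ⟪y, z⟫ = f z := fun z => InnerProductSpace.toDual_symm_apply
  have hyP : y ∈ polarCone (K : Set (EuclideanSpace ℝ (Fin m))) := by
    intro z hz; rw [hy]; exact hfa z hz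
  have := hx y hyP
  rw [real_inner_comm, hy] at this
  linarith

lemma rpow_half_sq {u : ℝ} (hu : 0 ≤ u) (e : ℝ) : (u ^ (e/2))^2 = u ^ e := by
  rw [← Real.rpow_natCast (u^(e/2)) 2, ← Real.rpow_mul hu]; norm_num

lemma rpow_pow {u : ℝ} (hu : 0 ≤ u) (e : ℝ) (k : ℕ) : (u ^ e)^k = u ^ (e * k) := by
  rw [← Real.rpow_natCast (u^e) k, ← Real.rpow_mul hu]

section W
variable {n : ℕ} (hn : 2 ≤ n) (u1 u2 : ℝ) (hu1 : 0 ≤ u1) (hu2 : 0 ≤ u2)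
  (hsum : u1 ^ ((2 ^ n : ℝ) / (2 ^ n - 1)) + u2 ^ ((2 ^ n : ℝ) / (2 ^ n - 1)) = 1)
  (w : EuclideanSpace ℝ (Fin (2 * n + 1)))
  (hw : ∀ j : Fin (2 * n + 1),
      w j = if (j : ℕ) = 0 then u1 ^ (((2 ^ n : ℝ) / (2 ^ n - 1)) / 2 ^ n)
            else if (j : ℕ) = 1 then u2 ^ (((2 ^ n : ℝ) / (2 ^ n - 1)) / 2 ^ n)
            else if (j : ℕ) = 2 then 1
            else if (j : ℕ) ≤ n + 1 then
              u1 ^ (((2 ^ n : ℝ) / (2 ^ n - 1)) / 2 ^ ((j : ℕ) - 2))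
            else u2 ^ (((2 ^ n : ℝ) / (2 ^ n - 1)) / 2 ^ ((j : ℕ) - (n + 1))))

include hw hn

lemma w_at (k : ℕ) (hk : k < 2*n+1) :
    w ((k : ℕ) : Fin (2*n+1)) =
      if k = 0 then u1 ^ (((2 ^ n : ℝ) / (2 ^ n - 1)) / 2 ^ n)
      else if k = 1 then u2 ^ (((2 ^ n : ℝ) / (2 ^ n - 1)) / 2 ^ n)
      else if k = 2 then 1
      else if k ≤ n + 1 then u1 ^ (((2 ^ n : ℝ) / (2 ^ n - 1)) / 2 ^ (k - 2))
      else u2 ^ (((2 ^ n : ℝ) / (2 ^ n - 1)) / 2 ^ (k - (n + 1))) := by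
  rw [hw ((k : ℕ) : Fin (2*n+1)), Fin.val_cast_of_lt hk]

lemma w_y (k : ℕ) (h3 : 3 ≤ k) (hk : k ≤ n+1) :
    w ((k : ℕ) : Fin (2*n+1)) = u1 ^ (((2 ^ n : ℝ) / (2 ^ n - 1)) / 2 ^ (k - 2)) := by
  rw [w_at hn u1 u2 w hw k (by omega), if_neg (by omega), if_neg (by omega), if_neg (by omega),
    if_pos (by omega)]

lemma w_z (k : ℕ) (h3 : n+2 ≤ k) (hk : k ≤ 2*n) :
    w ((k : ℕ) : Fin (2*n+1)) = u2 ^ (((2 ^ n : ℝ) / (2 ^ n - 1)) / 2 ^ (k - (n+1))) := by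
  rw [w_at hn u1 u2 w hw k (by omega), if_neg (by omega), if_neg (by omega), if_neg (by omega),
    if_neg (by omega)]

lemma w_0 : w ((0 : ℕ) : Fin (2*n+1)) = u1 ^ (((2 ^ n : ℝ) / (2 ^ n - 1)) / 2 ^ n) := by
  rw [w_at hn u1 u2 w hw 0 (by omega), if_pos rfl]

lemma w_1 : w ((1 : ℕ) : Fin (2*n+1)) = u2 ^ (((2 ^ n : ℝ) / (2 ^ n - 1)) / 2 ^ n) := by
  rw [w_at hn u1 u2 w hw 1 (by omega), if_neg (by omega), if_pos rfl]

lemma w_2 : w ((2 : ℕ) : Fin (2*n+1)) = 1 := by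
  rw [w_at hn u1 u2 w hw 2 (by omega), if_neg (by omega), if_neg (by omega), if_pos rfl]

include hu1 hu2 hsum

lemma w_mem : w ∈ coneK n := by
  set lam : ℝ := (2 ^ n : ℝ) / (2 ^ n - 1) with hlam
  have e2 : ∀ (u : ℝ), 0 ≤ u → ∀ i : ℕ, 1 ≤ i → (u ^ (lam / 2 ^ i))^2 = u ^ (lam / 2^(i-1)) := by
    intro u hu i hi
    have h : lam / 2^i = (lam / 2^(i-1)) / 2 := by
      conv_rhs => rw [div_div, ← pow_succ, show i-1+1 = i by omega]
    rw [h, rpow_half_sq hu]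
  have en : ∀ (u : ℝ), 0 ≤ u → (u ^ (lam / 2 ^ n))^2 = u ^ (lam / 2^(n-1)) :=
    fun u hu => e2 u hu n (by omega)
  refine ⟨?_, ?_, ?_, ?_, ?_, ?_⟩
  · rw [show ((3 : Fin (2*n+1))) = ((3:ℕ) : Fin (2*n+1)) from rfl,
      show ((2 : Fin (2*n+1))) = ((2:ℕ) : Fin (2*n+1)) from rfl,
      w_y hn u1 u2 w hw 3 (by omega) (by omega),
      w_z hn u1 u2 w hw (n+2) (by omega) (by omega), w_2 hn u1 u2 w hw]
    have h1 : (3:ℕ) - 2 = 1 := by omega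
    have h2 : n+2 - (n+1) = 1 := by omega
    rw [h1, h2, e2 u1 hu1 1 le_rfl, e2 u2 hu2 1 le_rfl]
    simp only [pow_zero, div_one, one_pow]
    rw [hlam]; norm_num; linarith [hsum]
  · rw [show ((2 : Fin (2*n+1))) = ((2:ℕ) : Fin (2*n+1)) from rfl, w_2 hn u1 u2 w hw]; norm_num
  · intro i hi1 hi2
    rw [show ((2 : Fin (2*n+1))) = ((2:ℕ) : Fin (2*n+1)) from rfl,
      w_y hn u1 u2 w hw (2+i+1) (by omega) (by omega),
      w_y hn u1 u2 w hw (2+i) (by omega) (by omega), w_2 hn u1 u2 w hw]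
    have h1 : 2+i+1-2 = i+1 := by omega
    have h2 : 2+i-2 = i := by omega
    rw [h1, h2, e2 u1 hu1 (i+1) (by omega), show i+1-1 = i from by omega, one_mul]
  · rw [show ((2 : Fin (2*n+1))) = ((2:ℕ) : Fin (2*n+1)) from rfl,
      show ((0 : Fin (2*n+1))) = ((0:ℕ) : Fin (2*n+1)) from rfl,
      w_0 hn u1 u2 w hw, w_y hn u1 u2 w hw (n+1) (by omega) (by omega), w_2 hn u1 u2 w hw]
    have h1 : n+1-2 = n-1 := by omega
    rw [h1, en u1 hu1, one_mul]
  · intro i hi1 hi2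
    rw [show ((2 : Fin (2*n+1))) = ((2:ℕ) : Fin (2*n+1)) from rfl,
      w_z hn u1 u2 w hw (n+1+i+1) (by omega) (by omega),
      w_z hn u1 u2 w hw (n+1+i) (by omega) (by omega), w_2 hn u1 u2 w hw]
    have h1 : n+1+i+1-(n+1) = i+1 := by omega
    have h2 : n+1+i-(n+1) = i := by omega
    rw [h1, h2, e2 u2 hu2 (i+1) (by omega), show i+1-1 = i from by omega, one_mul]
  · rw [show ((2 : Fin (2*n+1))) = ((2:ℕ) : Fin (2*n+1)) from rfl,
      show ((1 : Fin (2*n+1))) = ((1:ℕ) : Fin (2*n+1)) from rfl,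
      w_1 hn u1 u2 w hw, w_z hn u1 u2 w hw (2*n) (by omega) (by omega), w_2 hn u1 u2 w hw]
    have h1 : 2*n-(n+1) = n-1 := by omega
    rw [h1, en u2 hu2, one_mul]

end W
lemma div_sq_le {b c a : ℝ} (ha : 0 < a) (h : b^2 ≤ a * c) : (b/a)^2 ≤ c/a := by
  rw [div_pow, div_le_div_iff₀ (by positivity) ha]; nlinarith

lemma le_of_sq_le_sq {x c : ℝ} (hx : 0 ≤ x) (hc : 0 ≤ c) (h : x^2 ≤ c^2) : x ≤ c := by
  nlinarith

lemma div_soc {b c a : ℝ} (ha : 0 < a) (h : b^2 + c^2 ≤ a^2) : (b/a)^2 + (c/a)^2 ≤ 1 := by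
  rw [div_pow, div_pow, ← add_div, div_le_one (by positivity)]; exact h

lemma eq_of_sq_between {x c : ℝ} (hx : 0 ≤ c) (hlow : c ≤ x) (h : x^2 ≤ c^2) : x = c :=
  le_antisymm (le_of_sq_le_sq (le_trans hx hlow) hx h) hlow

section Main
variable {n : ℕ} (hn : 2 ≤ n) (u1 u2 : ℝ) (hu1 : 0 ≤ u1) (hu2 : 0 ≤ u2)
  (hsum : u1 ^ ((2 ^ n : ℝ) / (2 ^ n - 1)) + u2 ^ ((2 ^ n : ℝ) / (2 ^ n - 1)) = 1)

include hn hu1 hu2 hsum in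
/-- The key uniqueness result: a point of the cone orthogonal to `v` has all
coordinates proportional to those of `w`. -/
lemma coneK_perp_ray (x : EuclideanSpace ℝ (Fin (2*n+1))) (hx : x ∈ coneK n)
    (hperp : u1 * x ((0:ℕ) : Fin (2*n+1)) + u2 * x ((1:ℕ) : Fin (2*n+1))
      = x ((2:ℕ) : Fin (2*n+1))) :
    ∀ (k : ℕ), k < 2*n+1 → x ((k : ℕ) : Fin (2*n+1)) = x ((2:ℕ) : Fin (2*n+1)) *
      (if k = 0 then u1 ^ (((2 ^ n : ℝ) / (2 ^ n - 1)) / 2 ^ n)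
       else if k = 1 then u2 ^ (((2 ^ n : ℝ) / (2 ^ n - 1)) / 2 ^ n)
       else if k = 2 then 1
       else if k ≤ n + 1 then u1 ^ (((2 ^ n : ℝ) / (2 ^ n - 1)) / 2 ^ (k - 2))
       else u2 ^ (((2 ^ n : ℝ) / (2 ^ n - 1)) / 2 ^ (k - (n + 1)))) := by
  set lam : ℝ := (2 ^ n : ℝ) / (2 ^ n - 1) with hlam
  have hκR : (1:ℝ) < 2^n := by
    have : (2:ℝ)^1 ≤ 2^n := by
      apply pow_le_pow_right₀ (by norm_num) (by omega)
    norm_num at this; linarith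
  have hne1 : (2:ℝ)^n - 1 ≠ 0 := by linarith
  have hne2 : (2:ℝ)^n ≠ 0 := by positivity
  have hlam0 : 0 < lam := by rw [hlam]; exact div_pos (by positivity) (by linarith)
  have ha0 : 0 ≤ x ((2:ℕ) : Fin (2*n+1)) := by
    have := hx.2.1
    rwa [show ((2 : Fin (2*n+1))) = ((2:ℕ) : Fin (2*n+1)) from rfl] at this
  rcases eq_or_lt_of_le ha0 with haz | ha
  · -- x₃ = 0 : everything is zero
    intro k hk
    rw [coneK_zero hn hx haz.symm, coneK_zero hn hx haz.symm, zero_mul]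
  -- now x₃ > 0
  have hxfull := hx
  obtain ⟨h1, h2, hy, hx0, hz, hx1⟩ := hx
  have l0 : ((0 : Fin (2*n+1))) = ((0:ℕ) : Fin (2*n+1)) := rfl
  have l1 : ((1 : Fin (2*n+1))) = ((1:ℕ) : Fin (2*n+1)) := rfl
  have l2 : ((2 : Fin (2*n+1))) = ((2:ℕ) : Fin (2*n+1)) := rfl
  have l3 : ((3 : Fin (2*n+1))) = ((3:ℕ) : Fin (2*n+1)) := rfl
  rw [l2] at h1 hy hx0 hz hx1
  rw [l3] at h1
  rw [l0] at hx0
  rw [l1] at hx1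
  set a : ℝ := x ((2:ℕ) : Fin (2*n+1)) with hadef
  set X : ℕ → ℝ := fun k => x ((k : ℕ) : Fin (2*n+1)) / a with hX
  -- scaled constraints
  have hXd : ∀ k : ℕ, X k = x ((k : ℕ) : Fin (2*n+1)) / a := fun k => rfl
  have hax : ∀ k : ℕ, x ((k : ℕ) : Fin (2*n+1)) = a * X k := by
    intro k; rw [hXd k]; field_simp
  have s1 : (X 3)^2 + (X (n+2))^2 ≤ 1 := by
    rw [hXd, hXd]; exact div_soc ha h1
  have sy : ∀ i : ℕ, 1 ≤ i → i ≤ n-2 → (X (2+i+1))^2 ≤ X (2+i) := by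
    intro i hi1 hi2; rw [hXd, hXd]; exact div_sq_le ha (hy i hi1 hi2)
  have sz : ∀ i : ℕ, 1 ≤ i → i ≤ n-2 → (X (n+1+i+1))^2 ≤ X (n+1+i) := by
    intro i hi1 hi2; rw [hXd, hXd]; exact div_sq_le ha (hz i hi1 hi2)
  have sx0 : (X 0)^2 ≤ X (n+1) := by rw [hXd, hXd]; exact div_sq_le ha hx0
  have sx1 : (X 1)^2 ≤ X (2*n) := by rw [hXd, hXd]; exact div_sq_le ha hx1
  have sperp : u1 * X 0 + u2 * X 1 = 1 := by
    rw [hXd, hXd]; field_simp; linarith [hperp]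
  have Xnn : ∀ k : ℕ, 3 ≤ k → k ≤ 2*n → 0 ≤ X k := by
    intro k h3 h2n
    rw [hXd]
    exact div_nonneg (coneK_nonneg hn hxfull h3 h2n) ha0
  -- chain lower bounds
  have clY : ∀ k : ℕ, 1 ≤ k → k ≤ n-1 → ((X 0)^2)^(2^(k-1)) ≤ X (2+(n-k)) := by
    intro k hk1
    induction k, hk1 using Nat.le_induction with
    | base =>
      intro _
      rw [show (1:ℕ)-1 = 0 from rfl, pow_zero, pow_one, show 2+(n-1) = n+1 by omega]
      exact sx0
    | succ k hk ih =>
      intro hkn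
      have ih' := ih (by omega)
      have step := sy (n-k-1) (by omega) (by omega)
      rw [show 2+(n-k-1)+1 = 2+(n-k) by omega] at step
      have sq : (((X 0)^2)^(2^(k-1)))^2 ≤ (X (2+(n-k)))^2 :=
        pow_le_pow_left₀ (by positivity) ih' 2
      rw [show 2+(n-k-1) = 2+(n-(k+1)) by omega] at step
      calc ((X 0)^2)^(2^(k+1-1)) = (((X 0)^2)^(2^(k-1)))^2 := by
            rw [show (2:ℕ)^(k+1-1) = 2^(k-1)*2 from by
              rw [show k+1-1 = (k-1)+1 by omega, pow_succ], pow_mul]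
        _ ≤ (X (2+(n-k)))^2 := sq
        _ ≤ X (2+(n-(k+1))) := step
  have clZ : ∀ k : ℕ, 1 ≤ k → k ≤ n-1 → ((X 1)^2)^(2^(k-1)) ≤ X (n+1+(n-k)) := by
    intro k hk1
    induction k, hk1 using Nat.le_induction with
    | base =>
      intro _
      rw [show (1:ℕ)-1 = 0 from rfl, pow_zero, pow_one, show n+1+(n-1) = 2*n by omega]
      exact sx1
    | succ k hk ih =>
      intro hkn
      have ih' := ih (by omega)
      have step := sz (n-k-1) (by omega) (by omega)
      rw [show n+1+(n-k-1)+1 = n+1+(n-k) by omega] at step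
      have sq : (((X 1)^2)^(2^(k-1)))^2 ≤ (X (n+1+(n-k)))^2 :=
        pow_le_pow_left₀ (by positivity) ih' 2
      rw [show n+1+(n-k-1) = n+1+(n-(k+1)) by omega] at step
      calc ((X 1)^2)^(2^(k+1-1)) = (((X 1)^2)^(2^(k-1)))^2 := by
            rw [show (2:ℕ)^(k+1-1) = 2^(k-1)*2 from by
              rw [show k+1-1 = (k-1)+1 by omega, pow_succ], pow_mul]
        _ ≤ (X (n+1+(n-k)))^2 := sq
        _ ≤ X (n+1+(n-(k+1))) := step
  -- A and B
  set A : ℝ := u1 ^ (lam / 2^n) with hAdef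
  set B : ℝ := u2 ^ (lam / 2^n) with hBdef
  have hA0 : 0 ≤ A := Real.rpow_nonneg hu1 _
  have hB0 : 0 ≤ B := Real.rpow_nonneg hu2 _
  have h2pow1 : (1:ℕ) ≤ 2^n := Nat.one_le_two_pow
  have hcastκ : (((2:ℕ)^n : ℕ) : ℝ) = (2:ℝ)^n := by push_cast; ring
  have hApow : ∀ (u : ℝ), 0 ≤ u → (u ^ (lam / 2^n))^(2^n : ℕ) = u ^ lam := by
    intro u hu
    rw [rpow_pow hu, hcastκ, div_mul_cancel₀]
    positivity
  have hA1 : ∀ (u : ℝ), 0 ≤ u → (u ^ (lam / 2^n))^(2^n - 1 : ℕ) = u := by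
    intro u hu
    rw [rpow_pow hu]
    have hc : (((2:ℕ)^n - 1 : ℕ) : ℝ) = (2:ℝ)^n - 1 := by
      have : (1:ℕ) ≤ 2^n := Nat.one_le_two_pow
      push_cast [this]; ring
    rw [hc, hlam]
    rw [show (2:ℝ)^n / (2^n-1) / 2^n * (2^n - 1) = 1 by field_simp]
    exact Real.rpow_one u
  -- the κ-th power bounds
  have hq0κ : (X 0)^(2^n : ℕ) ≤ (X 3)^2 := by
    have := clY (n-1) (by omega) (by omega)
    rw [show 2+(n-(n-1)) = 3 by omega] at this
    have sq := pow_le_pow_left₀ (by positivity) this 2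
    calc (X 0)^(2^n : ℕ) = (((X 0)^2)^(2^(n-1-1)))^2 := by
          rw [show (2:ℕ)^n = 2*(2^(n-1-1)*2) from by
            rw [show n-1-1 = n-2 by omega, show 2*(2^(n-2)*2) = 2^(n-2+2) from by
              rw [pow_add]; ring, show n-2+2 = n by omega], pow_mul, pow_mul]
      _ ≤ (X 3)^2 := sq
  have hq1κ : (X 1)^(2^n : ℕ) ≤ (X (n+2))^2 := by
    have := clZ (n-1) (by omega) (by omega)
    rw [show n+1+(n-(n-1)) = n+2 by omega] at this
    have sq := pow_le_pow_left₀ (by positivity) this 2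
    calc (X 1)^(2^n : ℕ) = (((X 1)^2)^(2^(n-1-1)))^2 := by
          rw [show (2:ℕ)^n = 2*(2^(n-1-1)*2) from by
            rw [show n-1-1 = n-2 by omega, show 2*(2^(n-2)*2) = 2^(n-2+2) from by
              rw [pow_add]; ring, show n-2+2 = n by omega], pow_mul, pow_mul]
      _ ≤ (X (n+2))^2 := sq
  have hsum1 : (X 0)^(2^n : ℕ) + (X 1)^(2^n : ℕ) ≤ 1 :=
    le_trans (add_le_add hq0κ hq1κ) s1
  -- even powers are nonneg & abs
  have habs : ∀ r : ℝ, |r|^(2^n : ℕ) = r^(2^n : ℕ) := by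
    intro r
    rw [pow_abs, abs_of_nonneg]
    have hp2 : (2:ℕ)^n = 2^(n-1)*2 := by
      conv_lhs => rw [show n = (n-1)+1 by omega, pow_succ]
    have : r^(2^n : ℕ) = (r^2)^(2^(n-1) : ℕ) := by rw [hp2, pow_mul']
    rw [this]; positivity
  -- apply the Hölder equality lemma
  have hApowA : A^(2^n : ℕ) = u1 ^ lam := by rw [hAdef]; exact hApow u1 hu1
  have hBpowB : B^(2^n : ℕ) = u2 ^ lam := by rw [hBdef]; exact hApow u2 hu2
  have hA1A : A^(2^n - 1 : ℕ) = u1 := by rw [hAdef]; exact hA1 u1 hu1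
  have hB1B : B^(2^n - 1 : ℕ) = u2 := by rw [hBdef]; exact hA1 u2 hu2
  have hmain := holder_eq n (by omega) A B (|X 0|) (|X 1|) hA0 hB0 (abs_nonneg _) (abs_nonneg _)
    (by rw [hApowA, hBpowB]; exact hsum)
    (by
      rw [hA1A, hB1B]
      calc (1:ℝ) = u1 * X 0 + u2 * X 1 := sperp.symm
        _ ≤ u1 * |X 0| + u2 * |X 1| :=
            add_le_add (mul_le_mul_of_nonneg_left (le_abs_self _) hu1)
              (mul_le_mul_of_nonneg_left (le_abs_self _) hu2)
      )
    (by rw [habs, habs]; exact hsum1)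
  obtain ⟨hs, ht⟩ := hmain
  have eA : u1 * A = A^(2^n : ℕ) := by
    conv_rhs => rw [show (2^n : ℕ) = (2^n-1)+1 by omega, pow_succ, hA1A]
  have eB : u2 * B = B^(2^n : ℕ) := by
    conv_rhs => rw [show (2^n : ℕ) = (2^n-1)+1 by omega, pow_succ, hB1B]
  have hABsum : u1 * A + u2 * B = 1 := by
    rw [eA, eB, hApowA, hBpowB]; exact hsum
  -- recover X 0 = A, X 1 = B
  have hq0 : X 0 = A := by
    rcases eq_or_lt_of_le hu1 with h | h
    · have hAz : A = 0 := by
        rw [hAdef, ← h, Real.zero_rpow]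
        exact ne_of_gt (div_pos hlam0 (by positivity))
      rw [hAz] at hs ⊢
      exact abs_eq_zero.mp hs
    · have h1' : u1 * X 0 ≤ u1 * A := by
        rw [← hs]; exact mul_le_mul_of_nonneg_left (le_abs_self _) hu1
      have h2' : u2 * X 1 ≤ u2 * B := by
        rw [← ht]; exact mul_le_mul_of_nonneg_left (le_abs_self _) hu2
      have heq : u1 * X 0 = u1 * A := by linarith
      exact mul_left_cancel₀ (ne_of_gt h) heq
  have hq1 : X 1 = B := by
    rcases eq_or_lt_of_le hu2 with h | h
    · have hBz : B = 0 := by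
        rw [hBdef, ← h, Real.zero_rpow]
        exact ne_of_gt (div_pos hlam0 (by positivity))
      rw [hBz] at ht ⊢
      exact abs_eq_zero.mp ht
    · have h1' : u1 * X 0 ≤ u1 * A := by
        rw [← hs]; exact mul_le_mul_of_nonneg_left (le_abs_self _) hu1
      have h2' : u2 * X 1 ≤ u2 * B := by
        rw [← ht]; exact mul_le_mul_of_nonneg_left (le_abs_self _) hu2
      have heq : u2 * X 1 = u2 * B := by linarith
      exact mul_left_cancel₀ (ne_of_gt h) heq
  -- power identities
  have hpowsplit : ∀ j : ℕ, 1 ≤ j → (2:ℕ)^j = 2^(j-1)*2 := by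
    intro j hj
    conv_lhs => rw [show j = (j-1)+1 by omega, pow_succ]
  have hABpow : ∀ (C : ℝ), ∀ j : ℕ, 1 ≤ j → (C^2)^(2^(j-1) : ℕ) = C^(2^j : ℕ) := by
    intro C j hj
    rw [← pow_mul', ← hpowsplit j hj]
  -- y-coordinates
  have claimY : ∀ i : ℕ, 1 ≤ i → i ≤ n-1 → X (2+i) = A^(2^(n-i) : ℕ) := by
    intro i hi1
    induction i, hi1 using Nat.le_induction with
    | base =>
      intro _
      have lb := clY (n-1) (by omega) (by omega)
      rw [show 2+(n-(n-1)) = 2+1 by omega] at lb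
      rw [hq0, hABpow A (n-1) (by omega)] at lb
      have lbz := clZ (n-1) (by omega) (by omega)
      rw [show n+1+(n-(n-1)) = n+2 by omega] at lbz
      rw [hq1, hABpow B (n-1) (by omega)] at lbz
      have hup : (X (2+1))^2 ≤ (A^(2^(n-1) : ℕ))^2 := by
        have hBsq : (B^(2^(n-1) : ℕ))^2 ≤ (X (n+2))^2 :=
          pow_le_pow_left₀ (by positivity) lbz 2
        have hAB1 : (A^(2^(n-1):ℕ))^2 + (B^(2^(n-1):ℕ))^2 = 1 := by
          rw [← pow_mul, ← pow_mul, ← hpowsplit n (by omega), hApowA, hBpowB]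
          exact hsum
        have := s1
        rw [show (3:ℕ) = 2+1 by omega] at this
        linarith
      exact eq_of_sq_between (by positivity) lb hup
    | succ i hi ih =>
      intro hin
      have hprev := ih (by omega)
      have step := sy i (by omega) (by omega)
      rw [hprev] at step
      have hsq : A^(2^(n-i) : ℕ) = (A^(2^(n-(i+1)) : ℕ))^2 := by
        rw [show n-(i+1) = (n-i)-1 by omega, ← pow_mul, ← hpowsplit (n-i) (by omega)]
      rw [hsq] at step
      have lb := clY (n-(i+1)) (by omega) (by omega)
      rw [show 2+(n-(n-(i+1))) = 2+(i+1) by omega] at lb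
      rw [hq0, hABpow A (n-(i+1)) (by omega)] at lb
      exact eq_of_sq_between (by positivity) lb step
  -- z-coordinates
  have claimZ : ∀ i : ℕ, 1 ≤ i → i ≤ n-1 → X (n+1+i) = B^(2^(n-i) : ℕ) := by
    intro i hi1
    induction i, hi1 using Nat.le_induction with
    | base =>
      intro _
      have lb := clZ (n-1) (by omega) (by omega)
      rw [show n+1+(n-(n-1)) = n+1+1 by omega] at lb
      rw [hq1, hABpow B (n-1) (by omega)] at lb
      have lby := clY (n-1) (by omega) (by omega)
      rw [show 2+(n-(n-1)) = 3 by omega] at lby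
      rw [hq0, hABpow A (n-1) (by omega)] at lby
      have hup : (X (n+1+1))^2 ≤ (B^(2^(n-1) : ℕ))^2 := by
        have hAsq : (A^(2^(n-1) : ℕ))^2 ≤ (X 3)^2 :=
          pow_le_pow_left₀ (by positivity) lby 2
        have hAB1 : (A^(2^(n-1):ℕ))^2 + (B^(2^(n-1):ℕ))^2 = 1 := by
          rw [← pow_mul, ← pow_mul, ← hpowsplit n (by omega), hApowA, hBpowB]
          exact hsum
        have := s1
        rw [show n+2 = n+1+1 by omega] at this
        linarith
      exact eq_of_sq_between (by positivity) lb hup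
    | succ i hi ih =>
      intro hin
      have hprev := ih (by omega)
      have step := sz i (by omega) (by omega)
      rw [hprev] at step
      have hsq : B^(2^(n-i) : ℕ) = (B^(2^(n-(i+1)) : ℕ))^2 := by
        rw [show n-(i+1) = (n-i)-1 by omega, ← pow_mul, ← hpowsplit (n-i) (by omega)]
      rw [hsq] at step
      have lb := clZ (n-(i+1)) (by omega) (by omega)
      rw [show n+1+(n-(n-(i+1))) = n+1+(i+1) by omega] at lb
      rw [hq1, hABpow B (n-(i+1)) (by omega)] at lb
      exact eq_of_sq_between (by positivity) lb step
  -- translating nat powers of A, B back to rpow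
  have haru : ∀ (u : ℝ), 0 ≤ u → ∀ i : ℕ, 1 ≤ i → i ≤ n-1 →
      (u ^ (lam / 2^n))^(2^(n-i) : ℕ) = u ^ (lam / 2^i) := by
    intro u hu i hi1 hi2
    rw [rpow_pow hu]
    congr 1
    have hc : (((2:ℕ)^(n-i) : ℕ) : ℝ) = (2:ℝ)^(n-i) := by push_cast; ring
    rw [hc]
    have hsplit : (2:ℝ)^n = 2^i * 2^(n-i) := by
      rw [← pow_add, show i+(n-i) = n by omega]
    rw [hsplit]
    have h2i : ((2:ℝ)^i) ≠ 0 := by positivity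
    have h2ni : ((2:ℝ)^(n-i)) ≠ 0 := by positivity
    field_simp
  -- final coordinatewise conclusion
  intro k hk
  by_cases hk0 : k = 0
  · subst hk0
    rw [if_pos rfl, hax 0, hq0, hAdef]
  by_cases hk1 : k = 1
  · subst hk1
    rw [if_neg (by omega), if_pos rfl, hax 1, hq1, hBdef]
  by_cases hk2 : k = 2
  · subst hk2
    rw [if_neg (by omega), if_neg (by omega), if_pos rfl, mul_one]
  by_cases hkn : k ≤ n+1
  · -- y-range
    rw [if_neg hk0, if_neg hk1, if_neg hk2, if_pos hkn]
    have hcl := claimY (k-2) (by omega) (by omega)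
    rw [show 2+(k-2) = k by omega] at hcl
    rw [hax k, hcl, hAdef, haru u1 hu1 (k-2) (by omega) (by omega)]
  · -- z-range
    rw [if_neg hk0, if_neg hk1, if_neg hk2, if_neg hkn]
    have hcl := claimZ (k-(n+1)) (by omega) (by omega)
    rw [show n+1+(k-(n+1)) = k by omega] at hcl
    rw [hax k, hcl, hBdef, haru u2 hu2 (k-(n+1)) (by omega) (by omega)]


end Main
end ConeAux

/-- The normal cone of `Kₙ°` at the boundary point
`v = (u₁, u₂, −1, 0, …, 0)` is the ray generated by
`w = (u₁^{λ/2ⁿ}, u₂^{λ/2ⁿ}, 1, u₁^{λ/2}, …, u₁^{λ/2^{n−1}}, u₂^{λ/2}, …, u₂^{λ/2^{n−1}})`. -/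
theorem normalCone_polarK_ray (n : ℕ) (hn : 2 ≤ n) (u1 u2 : ℝ) (hu1 : 0 ≤ u1) (hu2 : 0 ≤ u2)
    (hsum : u1 ^ ((2 ^ n : ℝ) / (2 ^ n - 1)) + u2 ^ ((2 ^ n : ℝ) / (2 ^ n - 1)) = 1)
    (v w : EuclideanSpace ℝ (Fin (2 * n + 1)))
    (hv : ∀ j : Fin (2 * n + 1),
      v j = if (j : ℕ) = 0 then u1 else if (j : ℕ) = 1 then u2
            else if (j : ℕ) = 2 then -1 else 0)
    (hw : ∀ j : Fin (2 * n + 1),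
      w j = if (j : ℕ) = 0 then u1 ^ (((2 ^ n : ℝ) / (2 ^ n - 1)) / 2 ^ n)
            else if (j : ℕ) = 1 then u2 ^ (((2 ^ n : ℝ) / (2 ^ n - 1)) / 2 ^ n)
            else if (j : ℕ) = 2 then 1
            else if (j : ℕ) ≤ n + 1 then
              u1 ^ (((2 ^ n : ℝ) / (2 ^ n - 1)) / 2 ^ ((j : ℕ) - 2))
            else u2 ^ (((2 ^ n : ℝ) / (2 ^ n - 1)) / 2 ^ ((j : ℕ) - (n + 1))))
    (hvbdry : v ∈ frontier (polarCone (coneK n))) :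
    normalConeAt (polarCone (coneK n)) v = {x | ∃ t : ℝ, 0 ≤ t ∧ x = t • w} := by
  have hκR : (1:ℝ) < 2^n := by
    have h : (2:ℝ)^1 ≤ 2^n := pow_le_pow_right₀ (by norm_num) (by omega)
    norm_num at h; linarith
  have e0 : ((0:ℕ) : Fin (2*n+1)) = (⟨0, by omega⟩ : Fin (2*n+1)) := by
    ext; exact Fin.val_cast_of_lt (by omega)
  have e1 : ((1:ℕ) : Fin (2*n+1)) = (⟨1, by omega⟩ : Fin (2*n+1)) := by
    ext; exact Fin.val_cast_of_lt (by omega)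
  have e2 : ((2:ℕ) : Fin (2*n+1)) = (⟨2, by omega⟩ : Fin (2*n+1)) := by
    ext; exact Fin.val_cast_of_lt (by omega)
  have innerv : ∀ y : EuclideanSpace ℝ (Fin (2*n+1)),
      ⟪y, v⟫ = u1 * y ((0:ℕ) : Fin (2*n+1)) + u2 * y ((1:ℕ) : Fin (2*n+1))
        - y ((2:ℕ) : Fin (2*n+1)) := by
    intro y
    rw [e0, e1, e2]
    exact ConeAux.inner_v (2*n+1) (by omega) u1 u2 v hv y
  have hwK : w ∈ coneK n := ConeAux.w_mem hn u1 u2 hu1 hu2 hsum w hw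
  have hA_mul : ∀ u : ℝ, 0 ≤ u →
      u * u ^ (((2:ℝ)^n / (2^n-1)) / 2^n) = u ^ ((2:ℝ)^n/(2^n-1)) := by
    intro u hu
    rcases eq_or_lt_of_le hu with h | h
    · rw [← h, zero_mul, Real.zero_rpow
        (ne_of_gt (div_pos (by positivity) (by linarith)))]
    · have hne1 : (2:ℝ)^n - 1 ≠ 0 := by linarith
      have hne2 : (2:ℝ)^n ≠ 0 := by positivity
      have hexp : (2:ℝ)^n/(2^n-1) = 1 + ((2:ℝ)^n/(2^n-1))/2^n := by
        rw [div_div, div_mul_eq_div_div_swap, div_self hne2, div_eq_iff hne1, add_mul,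
          one_mul, div_mul_cancel₀ _ hne1]
        ring
      conv_rhs => rw [hexp, Real.rpow_add h, Real.rpow_one]
  have hwv : ⟪w, v⟫ = 0 := by
    rw [innerv w, ConeAux.w_0 hn u1 u2 w hw, ConeAux.w_1 hn u1 u2 w hw,
      ConeAux.w_2 hn u1 u2 w hw, hA_mul u1 hu1, hA_mul u2 hu2]
    linarith [hsum]
  ext x
  constructor
  · intro hxN
    have hxN' : ∀ q ∈ polarCone (coneK n), ⟪x, q - v⟫ ≤ 0 := hxN
    have hvP : v ∈ polarCone (coneK n) :=
      (ConeAux.polar_closed _).closure_subset (frontier_subset_closure hvbdry)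
    have h0 := hxN' 0 (ConeAux.polar_zero_mem _)
    rw [zero_sub, inner_neg_right] at h0
    have h2v := hxN' ((2:ℝ) • v) (ConeAux.polar_smul (by norm_num) hvP)
    have h2v' : ⟪x, v⟫ ≤ 0 := by
      have hsv : (2:ℝ) • v - v = v := by
        rw [two_smul]; exact add_sub_cancel_right v v
      rwa [hsv] at h2v
    have hxv : ⟪x, v⟫ = 0 := le_antisymm h2v' (by linarith)
    have hxPP : x ∈ polarCone (polarCone (coneK n)) := by
      intro p hp
      have hpv := hxN' p hp
      rwa [inner_sub_right, hxv, sub_zero] at hpv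
    have hxK : x ∈ coneK n := ConeAux.polar_polar_subset
      { carrier := coneK n
        smul_mem' := fun c hc p hp => ConeAux.coneK_smul c (le_of_lt hc) hp
        add_mem' := fun p hp q hq => ConeAux.coneK_add hn hp hq }
      ⟨0, ConeAux.coneK_zero_mem⟩ ConeAux.coneK_closed hxPP
    have hperp : u1 * x ((0:ℕ) : Fin (2*n+1)) + u2 * x ((1:ℕ) : Fin (2*n+1))
        = x ((2:ℕ) : Fin (2*n+1)) := by
      have h := innerv x; rw [hxv] at h; linarith
    have ht0 : 0 ≤ x ((2:ℕ) : Fin (2*n+1)) := by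
      have h := hxK.2.1; rwa [ConeAux.lit2] at h
    refine ⟨x ((2:ℕ) : Fin (2*n+1)), ht0, ?_⟩
    ext j
    have hj := ConeAux.coneK_perp_ray hn u1 u2 hu1 hu2 hsum x hxK hperp (j:ℕ) j.isLt
    rw [Fin.cast_val_eq_self] at hj
    rw [ConeAux.smul_apply', hw j]
    exact hj
  · rintro ⟨t, ht, rfl⟩
    intro p hp
    rw [real_inner_smul_left, inner_sub_right, hwv, sub_zero]
    have h1 : ⟪w, p⟫ ≤ 0 := by rw [real_inner_comm]; exact hp w hwK
    exact mul_nonpos_of_nonneg_of_nonpos ht h1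
end

section
/- Let n ≥ 2, κ = 2ⁿ, λ = κ/(κ−1), and let x = (x₁, x₂, x₃, y, z) ∈ Kₙ satisfy x₃ = 1 and x₁u₁ + x₂u₂ = 1, where u₁, u₂ ≥ 0 with u₁^λ + u₂^λ = 1. Then x₁ = u₁^{λ/κ}, x₂ = u₂^{λ/κ}, yᵢ = u₁^{λ/2^i}, and zᵢ = u₂^{λ/2^i} for all i = 1, …, n−1. -/
private lemma sq_eq_of_nonneg' {c d : ℝ} (hc : 0 ≤ c) (hd : 0 ≤ d) (h : c ^ 2 = d ^ 2) :
    c = d := by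
  have h2 : |c| = |d| := by rw [← Real.sqrt_sq_eq_abs, ← Real.sqrt_sq_eq_abs, h]
  rwa [abs_of_nonneg hc, abs_of_nonneg hd] at h2

private lemma young_eq' {p q a b : ℝ} (hpq : p.HolderConjugate q) (ha : 0 ≤ a) (hb : 0 ≤ b)
    (h : a * b = a ^ p / p + b ^ q / q) : a ^ p = b ^ q := by
  have hp := hpq.pos
  have hq := hpq.symm.pos
  rcases eq_or_lt_of_le ha with ha0 | ha0
  · rw [← ha0, Real.zero_rpow hpq.ne_zero] at h ⊢
    rw [zero_mul, zero_div, zero_add] at h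
    rcases div_eq_zero_iff.mp h.symm with h' | h'
    · exact h'.symm
    · exact absurd h' hq.ne'
  rcases eq_or_lt_of_le hb with hb0 | hb0
  · rw [← hb0, Real.zero_rpow hpq.symm.ne_zero] at h ⊢
    rw [mul_zero, zero_div, add_zero] at h
    rcases div_eq_zero_iff.mp h.symm with h' | h'
    · exact h'
    · exact absurd h' hp.ne'
  by_contra hne
  have hXY : p * Real.log a ≠ q * Real.log b := by
    intro hxy
    apply hne
    rw [Real.rpow_def_of_pos ha0, Real.rpow_def_of_pos hb0, mul_comm (Real.log a) p,
      mul_comm (Real.log b) q, hxy]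
  have key := strictConvexOn_exp.2 (Set.mem_univ (p * Real.log a))
    (Set.mem_univ (q * Real.log b)) hXY
    (by positivity : (0:ℝ) < p⁻¹) (by positivity : (0:ℝ) < q⁻¹) hpq.inv_add_inv_eq_one
  simp only [smul_eq_mul] at key
  rw [inv_mul_cancel_left₀ hp.ne', inv_mul_cancel_left₀ hq.ne'] at key
  have e1 : Real.exp (p * Real.log a) = a ^ p := by
    rw [Real.rpow_def_of_pos ha0, mul_comm]
  have e2 : Real.exp (q * Real.log b) = b ^ q := by
    rw [Real.rpow_def_of_pos hb0, mul_comm]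
  rw [Real.exp_add, Real.exp_log ha0, Real.exp_log hb0, e1, e2, inv_mul_eq_div,
    inv_mul_eq_div] at key
  linarith

private lemma chain_low' (n : ℕ) (w : ℕ → ℝ) (c : ℝ)
    (h1 : ∀ i, 1 ≤ i → i ≤ n - 2 → (w (i + 1)) ^ 2 ≤ w i)
    (h2 : c ^ 2 ≤ w (n - 1)) :
    ∀ d i, i + d = n - 1 → 1 ≤ i → c ^ (2 ^ (d + 1)) ≤ w i := by
  intro d
  induction d with
  | zero =>
    intro i hi _
    have hi' : i = n - 1 := by omega
    subst hi'
    simpa using h2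
  | succ d ih =>
    intro i hi h1i
    have hprev := ih (i + 1) (by omega) (by omega)
    have hstep := h1 i h1i (by omega)
    have hnn : (0:ℝ) ≤ c ^ (2 ^ (d + 1)) := by
      rw [show (2:ℕ) ^ (d + 1) = 2 ^ d * 2 from pow_succ 2 d, pow_mul]
      positivity
    calc c ^ (2 ^ (d + 1 + 1)) = (c ^ (2 ^ (d + 1))) ^ 2 := by
          rw [← pow_mul, ← pow_succ]
      _ ≤ (w (i + 1)) ^ 2 := pow_le_pow_left₀ hnn hprev 2
      _ ≤ w i := hstep

private lemma pow_eq_rpow_aux' (n i : ℕ) (h1 : 1 ≤ i) (h2 : i ≤ n - 1) (hn : 2 ≤ n)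
    (u c L : ℝ) (hu : 0 ≤ u) (hc : c = u ^ (L / (2:ℝ) ^ n)) :
    c ^ ((2:ℕ) ^ (n - i)) = u ^ (L / (2:ℝ) ^ i) := by
  subst hc
  rw [← Real.rpow_natCast (u ^ (L / (2:ℝ) ^ n)) (2 ^ (n - i)), ← Real.rpow_mul hu]
  congr 1
  have hcast : ((2 ^ (n - i) : ℕ) : ℝ) = (2:ℝ) ^ (n - i) := by push_cast; ring
  rw [hcast]
  have h2n : (2:ℝ) ^ (n - i) * (2:ℝ) ^ i = (2:ℝ) ^ n := by
    rw [← pow_add]; congr 1; omega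
  have hi0 : ((2:ℝ) ^ i) ≠ 0 := by positivity
  have hn0 : ((2:ℝ) ^ n) ≠ 0 := by positivity
  field_simp
  linear_combination L * h2n

private lemma branch_eq' (n : ℕ) (hn : 2 ≤ n) (u L : ℝ) (hu : 0 ≤ u) (w : ℕ → ℝ)
    (hlow : ∀ i, 1 ≤ i → i ≤ n - 1 → u ^ (L / (2:ℝ) ^ i) ≤ w i)
    (hstep : ∀ i, 1 ≤ i → i ≤ n - 2 → (w (i + 1)) ^ 2 ≤ w i)
    (hbase : (w 1) ^ 2 = u ^ L) :
    ∀ i, 1 ≤ i → i ≤ n - 1 → w i = u ^ (L / (2:ℝ) ^ i) := by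
  have hsq : ∀ j : ℕ, (u ^ (L / (2:ℝ) ^ (j + 1))) ^ 2 = u ^ (L / (2:ℝ) ^ j) := by
    intro j
    rw [← Real.rpow_natCast (u ^ (L / (2:ℝ) ^ (j + 1))) 2, ← Real.rpow_mul hu]
    congr 1
    push_cast
    rw [pow_succ, ← div_div, div_mul_cancel₀ _ (two_ne_zero)]
  intro i hi
  induction i, hi using Nat.le_induction with
  | base =>
    intro hle
    have h1 : 0 ≤ w 1 := le_trans (Real.rpow_nonneg hu _) (hlow 1 le_rfl hle)
    refine sq_eq_of_nonneg' h1 (Real.rpow_nonneg hu _) ?_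
    rw [hbase, hsq 0]
    norm_num
  | succ i hi1 ih =>
    intro hile
    have hwi := ih (by omega)
    have hstep' := hstep i hi1 (by omega)
    have hlow' := hlow (i + 1) (by omega) hile
    have hd : 0 ≤ u ^ (L / (2:ℝ) ^ (i + 1)) := Real.rpow_nonneg hu _
    have hA : (w (i + 1)) ^ 2 ≤ (u ^ (L / (2:ℝ) ^ (i + 1))) ^ 2 := by
      rw [hsq i, ← hwi]; exact hstep'
    have hB : (u ^ (L / (2:ℝ) ^ (i + 1))) ^ 2 ≤ (w (i + 1)) ^ 2 :=
      pow_le_pow_left₀ hd hlow' 2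
    exact sq_eq_of_nonneg' (le_trans hd hlow') hd (le_antisymm hA hB)

/-- Uniqueness via the equality case of Hölder's inequality: if
`(x₁, x₂, 1, y, z) ∈ Kₙ` and `x₁u₁ + x₂u₂ = 1` with `u₁, u₂ ≥ 0`,
`u₁^λ + u₂^λ = 1` (where `κ = 2ⁿ`, `λ = κ/(κ−1)`), then
`x₁ = u₁^{λ/κ}`, `x₂ = u₂^{λ/κ}`, `yᵢ = u₁^{λ/2^i}`, `zᵢ = u₂^{λ/2^i}`. -/
theorem hoelder_uniqueness_in_K (n : ℕ) (hn : 2 ≤ n)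
    (u1 u2 : ℝ) (hu1 : 0 ≤ u1) (hu2 : 0 ≤ u2)
    (hsum : u1 ^ ((2 ^ n : ℝ) / (2 ^ n - 1)) + u2 ^ ((2 ^ n : ℝ) / (2 ^ n - 1)) = 1)
    (x1 x2 x3 : ℝ) (y z : ℕ → ℝ)
    (hx3 : x3 = 1)
    (hK1 : (y 1) ^ 2 + (z 1) ^ 2 ≤ x3 ^ 2) (hK2 : 0 ≤ x3)
    (hKy : ∀ i : ℕ, 1 ≤ i → i ≤ n - 2 → (y (i + 1)) ^ 2 ≤ x3 * y i)
    (hKy' : x1 ^ 2 ≤ x3 * y (n - 1))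
    (hKz : ∀ i : ℕ, 1 ≤ i → i ≤ n - 2 → (z (i + 1)) ^ 2 ≤ x3 * z i)
    (hKz' : x2 ^ 2 ≤ x3 * z (n - 1))
    (heq : x1 * u1 + x2 * u2 = 1) :
    x1 = u1 ^ (((2 ^ n : ℝ) / (2 ^ n - 1)) / 2 ^ n) ∧
    x2 = u2 ^ (((2 ^ n : ℝ) / (2 ^ n - 1)) / 2 ^ n) ∧
    (∀ i : ℕ, 1 ≤ i → i ≤ n - 1 →
      y i = u1 ^ (((2 ^ n : ℝ) / (2 ^ n - 1)) / 2 ^ i) ∧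
      z i = u2 ^ (((2 ^ n : ℝ) / (2 ^ n - 1)) / 2 ^ i)) := by
  subst hx3
  simp only [one_mul, one_pow] at hK1 hKy hKy' hKz hKz'
  have h4 : (4:ℝ) ≤ (2:ℝ) ^ n := by
    calc (4:ℝ) = 2 ^ 2 := by norm_num
    _ ≤ 2 ^ n := pow_le_pow_right₀ (by norm_num) hn
  set L : ℝ := (2 ^ n : ℝ) / (2 ^ n - 1) with hLdef
  have hKgt1 : (1:ℝ) < (2:ℝ) ^ n := by linarith
  have hK0 : ((2:ℝ) ^ n) ≠ 0 := by positivity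
  have hK10 : ((2:ℝ) ^ n - 1) ≠ 0 := ne_of_gt (by linarith)
  have hconj : ((2:ℝ) ^ n).HolderConjugate L := by
    rw [Real.holderConjugate_iff]
    constructor
    · exact hKgt1
    · rw [hLdef, inv_div]
      field_simp
      ring
  have hLpos : 0 < L := hconj.symm.pos
  have hylow : ∀ i, 1 ≤ i → i ≤ n - 1 → x1 ^ ((2:ℕ) ^ (n - i)) ≤ y i := by
    intro i h1 h2
    have := chain_low' n y x1 hKy hKy' (n - 1 - i) i (by omega) h1
    rwa [show n - 1 - i + 1 = n - i by omega] at this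
  have hzlow : ∀ i, 1 ≤ i → i ≤ n - 1 → x2 ^ ((2:ℕ) ^ (n - i)) ≤ z i := by
    intro i h1 h2
    have := chain_low' n z x2 hKz hKz' (n - 1 - i) i (by omega) h1
    rwa [show n - 1 - i + 1 = n - i by omega] at this
  have habs : ∀ (c : ℝ) (i : ℕ), 1 ≤ i → i ≤ n - 1 →
      c ^ ((2:ℕ) ^ (n - i)) = |c| ^ ((2:ℕ) ^ (n - i)) := by
    intro c i h1 h2
    have he : Even ((2:ℕ) ^ (n - i)) := (Nat.even_pow).mpr ⟨even_two, by omega⟩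
    exact (he.pow_abs c).symm
  set a := |x1| with hadef
  set b := |x2| with hbdef
  have ha0 : 0 ≤ a := abs_nonneg x1
  have hb0 : 0 ≤ b := abs_nonneg x2
  have hay1 : a ^ ((2:ℕ) ^ (n - 1)) ≤ y 1 := by
    have := hylow 1 le_rfl (by omega)
    rwa [habs x1 1 le_rfl (by omega)] at this
  have hbz1 : b ^ ((2:ℕ) ^ (n - 1)) ≤ z 1 := by
    have := hzlow 1 le_rfl (by omega)
    rwa [habs x2 1 le_rfl (by omega)] at this
  have hy1nn : 0 ≤ y 1 := le_trans (pow_nonneg ha0 _) hay1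
  have hz1nn : 0 ≤ z 1 := le_trans (pow_nonneg hb0 _) hbz1
  have hsq2 : ∀ c : ℝ, (c ^ ((2:ℕ) ^ (n - 1))) ^ 2 = c ^ ((2:ℕ) ^ n) := by
    intro c
    rw [← pow_mul, ← pow_succ, show n - 1 + 1 = n from by omega]
  have hyK : a ^ ((2:ℕ) ^ n) ≤ (y 1) ^ 2 := by
    rw [← hsq2 a]; exact pow_le_pow_left₀ (pow_nonneg ha0 _) hay1 2
  have hzK : b ^ ((2:ℕ) ^ n) ≤ (z 1) ^ 2 := by
    rw [← hsq2 b]; exact pow_le_pow_left₀ (pow_nonneg hb0 _) hbz1 2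
  have hKsum : a ^ ((2:ℕ) ^ n) + b ^ ((2:ℕ) ^ n) ≤ 1 := by linarith
  have hcastK : ∀ c : ℝ, c ^ ((2:ℝ) ^ n) = c ^ ((2:ℕ) ^ n) := by
    intro c
    rw [← Real.rpow_natCast c (2 ^ n)]
    congr 1
    push_cast
    ring
  have hxu1 : x1 * u1 ≤ a * u1 := by
    calc x1 * u1 ≤ |x1 * u1| := le_abs_self _
    _ = a * u1 := by rw [abs_mul, abs_of_nonneg hu1]
  have hxu2 : x2 * u2 ≤ b * u2 := by
    calc x2 * u2 ≤ |x2 * u2| := le_abs_self _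
    _ = b * u2 := by rw [abs_mul, abs_of_nonneg hu2]
  have hyoung1 : a * u1 ≤ a ^ ((2:ℝ) ^ n) / (2:ℝ) ^ n + u1 ^ L / L :=
    Real.young_inequality_of_nonneg ha0 hu1 hconj
  have hyoung2 : b * u2 ≤ b ^ ((2:ℝ) ^ n) / (2:ℝ) ^ n + u2 ^ L / L :=
    Real.young_inequality_of_nonneg hb0 hu2 hconj
  have hdiv : a ^ ((2:ℝ) ^ n) / (2:ℝ) ^ n + b ^ ((2:ℝ) ^ n) / (2:ℝ) ^ n ≤ 1 / (2:ℝ) ^ n := by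
    rw [← add_div]
    have hle : a ^ ((2:ℝ) ^ n) + b ^ ((2:ℝ) ^ n) ≤ 1 := by
      rw [hcastK a, hcastK b]; exact hKsum
    gcongr
  have hEL : u1 ^ L / L + u2 ^ L / L = 1 / L := by rw [← add_div, hsum]
  have hinv : 1 / (2:ℝ) ^ n + 1 / L = 1 := by
    have := hconj.inv_add_inv_eq_one
    rwa [← one_div, ← one_div] at this
  have hEa : a * u1 = a ^ ((2:ℝ) ^ n) / (2:ℝ) ^ n + u1 ^ L / L := by
    apply le_antisymm hyoung1
    linarith
  have hEb : b * u2 = b ^ ((2:ℝ) ^ n) / (2:ℝ) ^ n + u2 ^ L / L := by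
    apply le_antisymm hyoung2
    linarith
  have haK : a ^ ((2:ℝ) ^ n) = u1 ^ L := young_eq' hconj ha0 hu1 hEa
  have hbK : b ^ ((2:ℝ) ^ n) = u2 ^ L := young_eq' hconj hb0 hu2 hEb
  have he1 : a * u1 + b * u2 = 1 := by
    apply le_antisymm
    · linarith
    · linarith
  have ha_eq : a = u1 ^ (L / (2:ℝ) ^ n) := by
    have h1 : a = (a ^ ((2:ℝ) ^ n)) ^ (((2:ℝ) ^ n)⁻¹) := by
      rw [← Real.rpow_mul ha0, mul_inv_cancel₀ hK0, Real.rpow_one]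
    rw [h1, haK, ← Real.rpow_mul hu1, ← div_eq_mul_inv]
  have hb_eq : b = u2 ^ (L / (2:ℝ) ^ n) := by
    have h1 : b = (b ^ ((2:ℝ) ^ n)) ^ (((2:ℝ) ^ n)⁻¹) := by
      rw [← Real.rpow_mul hb0, mul_inv_cancel₀ hK0, Real.rpow_one]
    rw [h1, hbK, ← Real.rpow_mul hu2, ← div_eq_mul_inv]
  have hylow' : ∀ i, 1 ≤ i → i ≤ n - 1 → u1 ^ (L / (2:ℝ) ^ i) ≤ y i := by
    intro i h1 h2
    have h := hylow i h1 h2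
    rwa [habs x1 i h1 h2, pow_eq_rpow_aux' n i h1 h2 hn u1 a L hu1 ha_eq] at h
  have hzlow' : ∀ i, 1 ≤ i → i ≤ n - 1 → u2 ^ (L / (2:ℝ) ^ i) ≤ z i := by
    intro i h1 h2
    have h := hzlow i h1 h2
    rwa [habs x2 i h1 h2, pow_eq_rpow_aux' n i h1 h2 hn u2 b L hu2 hb_eq] at h
  have hy1sq : (y 1) ^ 2 = u1 ^ L := by
    have h1 : u1 ^ L ≤ (y 1) ^ 2 := by rw [← haK, hcastK a]; exact hyK
    have h2 : u2 ^ L ≤ (z 1) ^ 2 := by rw [← hbK, hcastK b]; exact hzK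
    apply le_antisymm _ h1
    linarith
  have hz1sq : (z 1) ^ 2 = u2 ^ L := by
    have h1 : u1 ^ L ≤ (y 1) ^ 2 := by rw [← haK, hcastK a]; exact hyK
    have h2 : u2 ^ L ≤ (z 1) ^ 2 := by rw [← hbK, hcastK b]; exact hzK
    apply le_antisymm _ h2
    linarith
  have hy_eq := branch_eq' n hn u1 L hu1 y hylow' hKy hy1sq
  have hz_eq := branch_eq' n hn u2 L hu2 z hzlow' hKz hz1sq
  have hx1 : x1 = u1 ^ (L / 2 ^ n) := by
    rcases eq_or_lt_of_le hu1 with h0 | h0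
    · have hz0 : u1 ^ (L / (2:ℝ) ^ n) = 0 := by
        rw [← h0, Real.zero_rpow (by positivity : L / (2:ℝ) ^ n ≠ 0)]
      have hA : a = 0 := by rw [ha_eq, hz0]
      have : x1 = 0 := abs_eq_zero.mp hA
      rw [this, hz0]
    · have hx : x1 * u1 = a * u1 := by
        apply le_antisymm hxu1
        linarith
      have : x1 = a := mul_right_cancel₀ h0.ne' hx
      rw [this, ha_eq]
  have hx2 : x2 = u2 ^ (L / 2 ^ n) := by
    rcases eq_or_lt_of_le hu2 with h0 | h0
    · have hz0 : u2 ^ (L / (2:ℝ) ^ n) = 0 := by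
        rw [← h0, Real.zero_rpow (by positivity : L / (2:ℝ) ^ n ≠ 0)]
      have hB : b = 0 := by rw [hb_eq, hz0]
      have : x2 = 0 := abs_eq_zero.mp hB
      rw [this, hz0]
    · have hx : x2 * u2 = b * u2 := by
        apply le_antisymm hxu2
        linarith
      have : x2 = b := mul_right_cancel₀ h0.ne' hx
      rw [this, hb_eq]
  exact ⟨hx1, hx2, fun i h1 h2 => ⟨hy_eq i h1 h2, hz_eq i h1 h2⟩⟩
end
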